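/- Let E : A → B be a conditional expectation of a unital C*-algebra A onto B with a quasi-basis {(u_i, v_i)}_{i=1}^n, i.e. a = Σ_i u_i E(v_i a) = Σ_i E(a u_i) v_i for all a ∈ A. Then the element Ind(E) = Σ_i u_i v_i is independent of the choice of quasi-basis and lies in the center of A. -/

import Mathlib

/-- Let `E : A → B` be a conditional expectation of a unital
C*-algebra `A` onto `B` with a quasi-basis `{(u i, v i)}`.  Then the element
`Ind E = ∑ u i * v i` is independent of the choice of quasi-basis and lies in
the center of `A`. -/
theorem stmt_4 {A : Type*} [NormedRing A] [StarRing A] [CStarRing A] [NormedAlgebra ℂ A]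
    [StarModule ℂ A] [CompleteSpace A]
    (B : StarSubalgebra ℂ A)
    (E : A →ₗ[ℂ] A)
    (hrange : ∀ x : A, E x ∈ B)
    (hfix : ∀ b ∈ B, E b = b)
    (hleft : ∀ b ∈ B, ∀ x : A, E (b * x) = b * E x)
    (hright : ∀ b ∈ B, ∀ x : A, E (x * b) = E x * b)
    {n m : ℕ} (u v : Fin n → A) (u' v' : Fin m → A)
    (hqb1 : ∀ a : A, a = ∑ i, u i * E (v i * a))
    (hqb2 : ∀ a : A, a = ∑ i, E (a * u i) * v i)
    (hqb1' : ∀ a : A, a = ∑ j, u' j * E (v' j * a))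
    (hqb2' : ∀ a : A, a = ∑ j, E (a * u' j) * v' j) :
    (∑ i, u i * v i) = (∑ j, u' j * v' j) ∧ (∑ i, u i * v i) ∈ Set.center A := by
  constructor
  · -- independence: expand v i via the second quasi-basis for (u', v')
    calc ∑ i, u i * v i
        = ∑ i, u i * (∑ j, E (v i * u' j) * v' j) := by
          refine Finset.sum_congr rfl fun i _ => ?_
          rw [← hqb2' (v i)]
      _ = ∑ j, (∑ i, u i * E (v i * u' j)) * v' j := by
          simp_rw [Finset.mul_sum, Finset.sum_mul, ← mul_assoc]
          rw [Finset.sum_comm]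
      _ = ∑ j, u' j * v' j := by
          refine Finset.sum_congr rfl fun j _ => ?_
          rw [← hqb1 (u' j)]
  · rw [Set.mem_center_iff]
    have key : ∀ a : A, a * (∑ i, u i * v i) = (∑ i, u i * v i) * a := fun a => by
      calc a * ∑ i, u i * v i
          = ∑ j, (a * u j) * v j := by rw [Finset.mul_sum]; simp_rw [mul_assoc]
        _ = ∑ j, (∑ i, u i * E (v i * (a * u j))) * v j := by
            refine Finset.sum_congr rfl fun j _ => ?_
            rw [← hqb1 (a * u j)]
        _ = ∑ i, u i * (∑ j, E ((v i * a) * u j) * v j) := by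
            simp_rw [Finset.mul_sum, Finset.sum_mul, mul_assoc]
            rw [Finset.sum_comm]
        _ = ∑ i, u i * (v i * a) := by
            refine Finset.sum_congr rfl fun i _ => ?_
            rw [← hqb2 (v i * a)]
        _ = (∑ i, u i * v i) * a := by
            rw [Finset.sum_mul]; simp_rw [mul_assoc]
    exact ⟨fun a => (key a).symm, fun _ _ => (mul_assoc _ _ _).symm,
      fun _ _ => mul_assoc _ _ _⟩
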